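/- Let G and H be finite simple graphs. Suppose H is not well-covered and G has an isolatable vertex. Then the Cartesian product G □ H is not well-covered. -/

import Mathlib

/-- A set of vertices is independent if no two of its vertices are adjacent. -/
def IsIndep {V : Type*} (G : SimpleGraph V) (s : Set V) : Prop :=
  ∀ ⦃u⦄, u ∈ s → ∀ ⦃v⦄, v ∈ s → ¬ G.Adj u v

/-- A maximal independent set: independent and contained in no strictly larger
independent set. -/
def MaxIndep {V : Type*} (G : SimpleGraph V) (s : Set V) : Prop :=
  IsIndep G s ∧ ∀ t : Set V, IsIndep G t → s ⊆ t → s = t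

/-- A maximal independent set of the subgraph induced on `A`. -/
def MaxIndepOn {V : Type*} (G : SimpleGraph V) (A : Set V) (s : Set V) : Prop :=
  s ⊆ A ∧ IsIndep G s ∧ ∀ t : Set V, t ⊆ A → IsIndep G t → s ⊆ t → s = t

/-- A graph is well-covered if every maximal independent set has the same cardinality. -/
def WellCovered {V : Type*} (G : SimpleGraph V) : Prop :=
  ∀ s t : Set V, MaxIndep G s → MaxIndep G t → s.ncard = t.ncard

/-- The closed neighborhood `N[S]`: the union of `S` with the set of all vertices
adjacent to some vertex of `S`. -/
def ClosedNbhd {V : Type*} (G : SimpleGraph V) (S : Set V) : Set V :=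
  S ∪ {v | ∃ u ∈ S, G.Adj u v}

/-- A vertex `x` is isolatable if there is an independent set `M` such that `x` is the
unique vertex lying outside `N[M]`. -/
def Isolatable {V : Type*} (G : SimpleGraph V) (x : V) : Prop :=
  ∃ M : Set V, IsIndep G M ∧ (ClosedNbhd G M)ᶜ = {x}

lemma aux_indep_empty {V : Type*} (G : SimpleGraph V) : IsIndep G (∅ : Set V) := by
  intro u hu; exact absurd hu (Set.notMem_empty u)

lemma aux_exists_max {V : Type*} [Fintype V] (G : SimpleGraph V) (A s0 : Set V) (h0 : s0 ⊆ A)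
    (hi : IsIndep G s0) : ∃ s, s0 ⊆ s ∧ MaxIndepOn G A s := by
  obtain ⟨s, ⟨hs0, hsA, hsi⟩, hmax⟩ :=
    Set.Finite.exists_maximalFor Set.ncard {s | s0 ⊆ s ∧ s ⊆ A ∧ IsIndep G s}
      (Set.toFinite _) ⟨s0, subset_rfl, h0, hi⟩
  refine ⟨s, hs0, hsA, hsi, fun t htA hti hst => ?_⟩
  have h := hmax (j := t) ⟨hs0.trans hst, htA, hti⟩ (Set.ncard_le_ncard hst (Set.toFinite t))
  exact Set.eq_of_subset_of_ncard_le hst h.ge (Set.toFinite t)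

lemma aux_dominates {V : Type*} {G : SimpleGraph V} {A s : Set V} (h : MaxIndepOn G A s)
    {p : V} (hpA : p ∈ A) (hps : p ∉ s) : ∃ q ∈ s, G.Adj q p := by
  by_contra hcon
  push_neg at hcon
  have hins : IsIndep G (insert p s) := by
    intro u hu v hv hadj
    rcases Set.mem_insert_iff.1 hu with hup | hu <;>
      rcases Set.mem_insert_iff.1 hv with hvp | hv
    · exact G.irrefl (show G.Adj p p by rw [hup, hvp] at hadj; exact hadj)
    · exact hcon v hv (by rw [hup] at hadj; exact hadj.symm)
    · exact hcon u hu (by rw [hvp] at hadj; exact hadj)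
    · exact h.2.1 hu hv hadj
  have heq := h.2.2 (insert p s) (Set.insert_subset hpA h.1) hins (Set.subset_insert p s)
  exact hps (by rw [heq]; exact Set.mem_insert p s)

lemma aux_maxIndep_dominates {V : Type*} {G : SimpleGraph V} {s : Set V} (h : MaxIndep G s)
    {p : V} (hps : p ∉ s) : ∃ q ∈ s, G.Adj q p :=
  aux_dominates (A := Set.univ) ⟨Set.subset_univ s, h.1, fun t _ => h.2 t⟩ (Set.mem_univ p) hps

lemma aux_maxIndep_of {V : Type*} {G : SimpleGraph V} {s : Set V} (h1 : IsIndep G s)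
    (h2 : ∀ p ∉ s, ∃ q ∈ s, G.Adj q p) : MaxIndep G s := by
  refine ⟨h1, fun t hti hst => ?_⟩
  by_contra hne
  obtain ⟨p, hpt, hps⟩ := Set.exists_of_ssubset (Set.ssubset_iff_subset_ne.2 ⟨hst, hne⟩)
  obtain ⟨q, hqs, hadj⟩ := h2 p hps
  exact hti (hst hqs) hpt hadj

lemma aux_maxIndepOn_to_max {V : Type*} {G : SimpleGraph V} {s : Set V}
    (h : MaxIndepOn G Set.univ s) : MaxIndep G s :=
  ⟨h.2.1, fun t hti hst => h.2.2 t (Set.subset_univ t) hti hst⟩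

/-- If `H` is not well-covered and `G` has an isolatable vertex, then `G □ H` is not
well-covered. -/
theorem stmt_1 {V W : Type*} [Fintype V] [Fintype W]
    (G : SimpleGraph V) (H : SimpleGraph W)
    (hH : ¬ WellCovered H) (hG : ∃ x : V, Isolatable G x) :
    ¬ WellCovered (G.boxProd H) := by
  intro hWC
  obtain ⟨x, M, hMind, hMiso⟩ := hG
  have hxnot : x ∉ ClosedNbhd G M := by
    have h : x ∈ (ClosedNbhd G M)ᶜ := by rw [hMiso]; exact rfl
    exact h
  have hxM : x ∉ M := fun h => hxnot (Set.mem_union_left _ h)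
  have hxAdj : ∀ m ∈ M, ¬ G.Adj m x := fun m hm hadj =>
    hxnot (Set.mem_union_right _ ⟨m, hm, hadj⟩)
  have hdom : ∀ v : V, v ≠ x → v ∈ M ∨ ∃ m ∈ M, G.Adj m v := by
    intro v hv
    by_contra hcon
    push_neg at hcon
    have hmem : v ∈ (ClosedNbhd G M)ᶜ := by
      intro hmem
      rcases (Set.mem_union _ _ _).1 hmem with h | ⟨m, hm, hadj⟩
      · exact hcon.1 h
      · exact hcon.2 m hm hadj
    rw [hMiso] at hmem
    exact hv hmem
  have key : ∀ B₁ B₂ : Set W, MaxIndep H B₁ → MaxIndep H B₂ → B₁.ncard ≤ B₂.ncard := by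
    intro B₁ B₂ hB₁ hB₂
    set R : Set (V × W) :=
      {p | p.1 ∉ M ∧ p.1 ≠ x ∧ p.2 ∉ B₁ ∧ ¬(G.Adj x p.1 ∧ p.2 ∈ B₂)} with hRdef
    obtain ⟨P, -, hPsub, hPind, hPmax⟩ :=
      aux_exists_max (G.boxProd H) R ∅ (Set.empty_subset R) (aux_indep_empty _)
    set C : Set (V × W) := (M ×ˢ B₁) ∪ P with hCdef
    have hPfacts : ∀ p ∈ P, p.1 ∉ M ∧ p.1 ≠ x ∧ p.2 ∉ B₁ ∧ ¬(G.Adj x p.1 ∧ p.2 ∈ B₂) :=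
      fun p hp => hPsub hp
    have hJind : ∀ B : Set W, IsIndep H B → (∀ p ∈ P, G.Adj x p.1 → p.2 ∉ B) →
        IsIndep (G.boxProd H) (({x} ×ˢ B) ∪ C) := by
      intro B hB hPB u hu v hv hadj
      rcases SimpleGraph.boxProd_adj.1 hadj with ⟨hg, he⟩ | ⟨hh, he⟩
      · -- G-adjacency in first coordinate, equal second coordinates
        rcases (Set.mem_union _ _ _).1 hu with hu | hu'
        · obtain ⟨hu1, hu2⟩ := Set.mem_prod.1 hu
          have hu1 : u.1 = x := hu1
          rcases (Set.mem_union _ _ _).1 hv with hv | hv'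
          · obtain ⟨hv1, hv2⟩ := Set.mem_prod.1 hv
            have hv1 : v.1 = x := hv1
            exact G.irrefl (show G.Adj x x by rw [hu1, hv1] at hg; exact hg)
          · rcases (Set.mem_union _ _ _).1 hv' with hv | hv
            · obtain ⟨hv1, hv2⟩ := Set.mem_prod.1 hv
              exact hxAdj v.1 hv1 (by rw [hu1] at hg; exact hg.symm)
            · have := (hPfacts v hv).2.2.1
              exact absurd (he ▸ hu2) ((hPB v hv (by rw [hu1] at hg; exact hg)))
        · rcases (Set.mem_union _ _ _).1 hu' with hu | hu
          · obtain ⟨hu1, hu2⟩ := Set.mem_prod.1 hu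
            rcases (Set.mem_union _ _ _).1 hv with hv | hv'
            · obtain ⟨hv1, hv2⟩ := Set.mem_prod.1 hv
              have hv1 : v.1 = x := hv1
              exact hxAdj u.1 hu1 (by rw [hv1] at hg; exact hg)
            · rcases (Set.mem_union _ _ _).1 hv' with hv | hv
              · obtain ⟨hv1, hv2⟩ := Set.mem_prod.1 hv
                exact hMind hu1 hv1 hg
              · exact (hPfacts v hv).2.2.1 (he ▸ hu2)
          · rcases (Set.mem_union _ _ _).1 hv with hv | hv'
            · obtain ⟨hv1, hv2⟩ := Set.mem_prod.1 hv
              have hv1 : v.1 = x := hv1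
              exact (hPB u hu (by rw [hv1] at hg; exact hg.symm)) (he ▸ hv2)
            · rcases (Set.mem_union _ _ _).1 hv' with hv | hv
              · obtain ⟨hv1, hv2⟩ := Set.mem_prod.1 hv
                exact (hPfacts u hu).2.2.1 (he ▸ hv2)
              · exact hPind hu hv hadj
      · -- H-adjacency in second coordinate, equal first coordinates
        rcases (Set.mem_union _ _ _).1 hu with hu | hu'
        · obtain ⟨hu1, hu2⟩ := Set.mem_prod.1 hu
          have hu1 : u.1 = x := hu1
          rcases (Set.mem_union _ _ _).1 hv with hv | hv'
          · obtain ⟨hv1, hv2⟩ := Set.mem_prod.1 hv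
            exact hB hu2 hv2 hh
          · rcases (Set.mem_union _ _ _).1 hv' with hv | hv
            · obtain ⟨hv1, hv2⟩ := Set.mem_prod.1 hv
              exact hxM (by rw [← hu1, he]; exact hv1)
            · exact (hPfacts v hv).2.1 (by rw [← he, hu1])
        · rcases (Set.mem_union _ _ _).1 hu' with hu | hu
          · obtain ⟨hu1, hu2⟩ := Set.mem_prod.1 hu
            rcases (Set.mem_union _ _ _).1 hv with hv | hv'
            · obtain ⟨hv1, hv2⟩ := Set.mem_prod.1 hv
              have hv1 : v.1 = x := hv1
              exact hxM (by rw [← hv1, ← he]; exact hu1)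
            · rcases (Set.mem_union _ _ _).1 hv' with hv | hv
              · obtain ⟨hv1, hv2⟩ := Set.mem_prod.1 hv
                exact hB₁.1 hu2 hv2 hh
              · exact (hPfacts v hv).1 (he ▸ hu1)
          · rcases (Set.mem_union _ _ _).1 hv with hv | hv'
            · obtain ⟨hv1, hv2⟩ := Set.mem_prod.1 hv
              have hv1 : v.1 = x := hv1
              exact (hPfacts u hu).2.1 (by rw [he, hv1])
            · rcases (Set.mem_union _ _ _).1 hv' with hv | hv
              · obtain ⟨hv1, hv2⟩ := Set.mem_prod.1 hv
                exact (hPfacts u hu).1 (by rw [he]; exact hv1)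
              · exact hPind hu hv hadj
    have hPB₁ : ∀ p ∈ P, G.Adj x p.1 → p.2 ∉ B₁ := fun p hp _ => (hPfacts p hp).2.2.1
    have hPB₂ : ∀ p ∈ P, G.Adj x p.1 → p.2 ∉ B₂ := fun p hp ha hm =>
      (hPfacts p hp).2.2.2 ⟨ha, hm⟩
    have hI₂max : MaxIndep (G.boxProd H) (({x} ×ˢ B₂) ∪ C) := by
      refine aux_maxIndep_of (hJind B₂ hB₂.1 hPB₂) ?_
      rintro ⟨v, w⟩ hp
      by_cases hvM : v ∈ M
      · have hwB : w ∉ B₁ := fun hw =>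
          hp (Set.mem_union_right _ (Set.mem_union_left _ (Set.mk_mem_prod hvM hw)))
        obtain ⟨b, hb, hadj⟩ := aux_maxIndep_dominates hB₁ hwB
        exact ⟨(v, b), Set.mem_union_right _ (Set.mem_union_left _ (Set.mk_mem_prod hvM hb)),
          SimpleGraph.boxProd_adj.2 (Or.inr ⟨hadj, rfl⟩)⟩
      · by_cases hvx : v = x
        · subst hvx
          have hwB : w ∉ B₂ := fun hw =>
            hp (Set.mem_union_left _ (Set.mk_mem_prod rfl hw))
          obtain ⟨b, hb, hadj⟩ := aux_maxIndep_dominates hB₂ hwB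
          exact ⟨(v, b), Set.mem_union_left _ (Set.mk_mem_prod rfl hb),
            SimpleGraph.boxProd_adj.2 (Or.inr ⟨hadj, rfl⟩)⟩
        · obtain ⟨m, hm, hmadj⟩ := (hdom v hvx).resolve_left hvM
          by_cases hwB₁ : w ∈ B₁
          · exact ⟨(m, w), Set.mem_union_right _ (Set.mem_union_left _ (Set.mk_mem_prod hm hwB₁)),
              SimpleGraph.boxProd_adj.2 (Or.inl ⟨hmadj, rfl⟩)⟩
          · by_cases hvw : (v, w) ∈ R
            · have hnp : (v, w) ∉ P := fun h =>
                hp (Set.mem_union_right _ (Set.mem_union_right _ h))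
              obtain ⟨q, hq, hadj⟩ := aux_dominates ⟨hPsub, hPind, hPmax⟩ hvw hnp
              exact ⟨q, Set.mem_union_right _ (Set.mem_union_right _ hq), hadj⟩
            · have hcase : G.Adj x v ∧ w ∈ B₂ := by
                by_contra hcon
                exact hvw ⟨hvM, hvx, hwB₁, hcon⟩
              exact ⟨(x, w), Set.mem_union_left _ (Set.mk_mem_prod rfl hcase.2),
                SimpleGraph.boxProd_adj.2 (Or.inl ⟨hcase.1, rfl⟩)⟩
    obtain ⟨I₁, hI₁sub, hI₁on⟩ := aux_exists_max (G.boxProd H) Set.univ (({x} ×ˢ B₁) ∪ C)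
      (Set.subset_univ _) (hJind B₁ hB₁.1 hPB₁)
    have hI₁max := aux_maxIndepOn_to_max hI₁on
    have hdisj : ∀ B : Set W, Disjoint ({x} ×ˢ B) C := by
      intro B
      rw [Set.disjoint_left]
      rintro ⟨v, w⟩ hmem hc
      obtain ⟨hv, -⟩ := Set.mem_prod.1 hmem
      have hv : v = x := hv
      rcases (Set.mem_union _ _ _).1 hc with h | h
      · exact hxM (hv ▸ (Set.mem_prod.1 h).1)
      · exact (hPfacts _ h).2.1 hv
    have hcardJ : ∀ B : Set W, (({x} ×ˢ B) ∪ C).ncard = B.ncard + C.ncard := by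
      intro B
      rw [Set.ncard_union_eq (hdisj B) (Set.toFinite _) (Set.toFinite _)]
      congr 1
      rw [Set.singleton_prod]
      exact Set.ncard_image_of_injective B (fun a b h => congrArg Prod.snd h)
    have h1 : B₁.ncard + C.ncard ≤ I₁.ncard := by
      rw [← hcardJ B₁]
      exact Set.ncard_le_ncard hI₁sub (Set.toFinite _)
    have h2 : I₁.ncard = B₂.ncard + C.ncard := by
      rw [← hcardJ B₂]
      exact hWC _ _ hI₁max hI₂max
    omega
  unfold WellCovered at hH
  push_neg at hH
  obtain ⟨s, t, hs, ht, hne⟩ := hH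
  exact hne (le_antisymm (key s t hs ht) (key t s ht hs))
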